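/- Let f : ℕ → ℂ be a multiplicative function and G a graph. Then the function g_{f,G}(m) = Σ_{N_1·N_2·⋯·N_v = m} f(n_1)⋯f(n_e), where the sum extends over all edge numberings (n_a)_{a∈E} of G whose associated vertex numbering (N_r) satisfies N_1⋯N_v = m, is a multiplicative function of m. -/

import Mathlib

set_option linter.unnecessarySimpa false


open scoped BigOperators Classical

noncomputable section

/-- The vertex numbering `N_r` associated to an edge numbering `n` of the graph with
vertex set `Fin v` and edge set `E`: the lcm of `n a` over the edges `a` incident to `r`
(equal to `1` if `r` is isolated). -/
def vertexNum (v : ℕ) (E : Finset (Sym2 (Fin v))) (n : {a : Sym2 (Fin v) // a ∈ E} → ℕ+)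
    (r : Fin v) : ℕ :=
  (E.attach.filter fun a => r ∈ a.1).lcm fun a => (n a : ℕ)

/-- `g_{f,G}(m) = Σ_{N_1 ⋯ N_v = m} f(n_1) ⋯ f(n_e)`, the sum extending over all edge
numberings of the graph whose associated vertex numbering has product `m`. -/
def gfG (v : ℕ) (E : Finset (Sym2 (Fin v))) (f : ℕ → ℂ) (m : ℕ) : ℂ :=
  ∑ᶠ n : {a : Sym2 (Fin v) // a ∈ E} → ℕ+,
    if ∏ r, vertexNum v E n r = m then ∏ a, f (n a : ℕ) else 0

/-- gcd is multiplicative in the second argument over coprime factors. -/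
lemma gcd_mul_right_of_coprime {x c d : ℕ} (h : Nat.Coprime c d) :
    Nat.gcd x (c * d) = Nat.gcd x c * Nat.gcd x d := by
  apply Nat.dvd_antisymm
  · have := gcd_mul_dvd_mul_gcd x c d
    simpa [gcd_eq_nat_gcd] using this
  · exact Nat.dvd_gcd
      (Nat.Coprime.mul_dvd_of_dvd_of_dvd
        ((h.coprime_dvd_left (Nat.gcd_dvd_right x c)).coprime_dvd_right (Nat.gcd_dvd_right x d))
        (Nat.gcd_dvd_left x c) (Nat.gcd_dvd_left x d))
      (mul_dvd_mul (Nat.gcd_dvd_right x c) (Nat.gcd_dvd_right x d))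

/-- Splitting a divisor of a coprime product into its gcd parts. -/
lemma gcd_split {m₁ m₂ d : ℕ} (h : Nat.Coprime m₁ m₂) (hd : d ∣ m₁ * m₂) :
    Nat.gcd d m₁ * Nat.gcd d m₂ = d := by
  apply Nat.dvd_antisymm
  · exact Nat.Coprime.mul_dvd_of_dvd_of_dvd
      ((Nat.Coprime.coprime_dvd_left (Nat.gcd_dvd_right d m₁)
        (h.coprime_dvd_right (Nat.gcd_dvd_right d m₂))))
      (Nat.gcd_dvd_left d m₁) (Nat.gcd_dvd_left d m₂)
  · have hgg : Nat.gcd d (m₁ * m₂) = Nat.gcd d m₁ * Nat.gcd d m₂ :=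
      gcd_mul_right_of_coprime h
    rw [Nat.gcd_eq_left hd] at hgg
    exact hgg.dvd

/-- Binary lcm splits along coprime "coordinates". -/
lemma lcm_mul_lcm_split {m₁ m₂ a b c d : ℕ} (h : Nat.Coprime m₁ m₂)
    (hm₁ : m₁ ≠ 0) (hm₂ : m₂ ≠ 0)
    (ha : a ∣ m₁) (hc : c ∣ m₁) (hb : b ∣ m₂) (hd : d ∣ m₂) :
    Nat.lcm (a * b) (c * d) = Nat.lcm a c * Nat.lcm b d := by
  have hbc : Nat.Coprime b c := (h.symm.coprime_dvd_left hb).coprime_dvd_right hc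
  have had : Nat.Coprime a d := (h.coprime_dvd_left ha).coprime_dvd_right hd
  have hcd : Nat.Coprime c d := (h.coprime_dvd_left hc).coprime_dvd_right hd
  have hg : Nat.gcd (a * b) (c * d) = Nat.gcd a c * Nat.gcd b d := by
    rw [gcd_mul_right_of_coprime hcd]
    congr 1
    · exact Nat.Coprime.gcd_mul_right_cancel a hbc
    · exact Nat.Coprime.gcd_mul_left_cancel b had
  have ha0 : a ≠ 0 := fun e => hm₁ (Nat.eq_zero_of_zero_dvd (e ▸ ha))
  have hb0 : b ≠ 0 := fun e => hm₂ (Nat.eq_zero_of_zero_dvd (e ▸ hb))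
  have hG : 0 < Nat.gcd a c * Nat.gcd b d :=
    Nat.mul_pos (Nat.gcd_pos_of_pos_left c (Nat.pos_of_ne_zero ha0))
      (Nat.gcd_pos_of_pos_left d (Nat.pos_of_ne_zero hb0))
  apply Nat.eq_of_mul_eq_mul_left hG
  calc (Nat.gcd a c * Nat.gcd b d) * Nat.lcm (a * b) (c * d)
      = Nat.gcd (a * b) (c * d) * Nat.lcm (a * b) (c * d) := by rw [hg]
    _ = (a * b) * (c * d) := Nat.gcd_mul_lcm _ _
    _ = (Nat.gcd a c * Nat.lcm a c) * (Nat.gcd b d * Nat.lcm b d) := by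
        rw [Nat.gcd_mul_lcm, Nat.gcd_mul_lcm]; ring
    _ = (Nat.gcd a c * Nat.gcd b d) * (Nat.lcm a c * Nat.lcm b d) := by ring

/-- Finset lcm splits along coprime "coordinates". -/
lemma finset_lcm_split {ι : Type*} {m₁ m₂ : ℕ} (h : Nat.Coprime m₁ m₂)
    (hm₁ : m₁ ≠ 0) (hm₂ : m₂ ≠ 0) (s : Finset ι) (x y : ι → ℕ)
    (hx : ∀ i ∈ s, x i ∣ m₁) (hy : ∀ i ∈ s, y i ∣ m₂) :
    (s.lcm fun i => x i * y i) = s.lcm x * s.lcm y := by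
  classical
  induction s using Finset.induction_on with
  | empty => simp
  | insert _ _ hnotmem ih =>
    rename_i a s
    rw [Finset.lcm_insert, Finset.lcm_insert, Finset.lcm_insert,
      ih (fun i hi => hx i (Finset.mem_insert_of_mem hi))
        (fun i hi => hy i (Finset.mem_insert_of_mem hi)),
      lcm_eq_nat_lcm, lcm_eq_nat_lcm, lcm_eq_nat_lcm]
    exact lcm_mul_lcm_split h hm₁ hm₂ (hx a (Finset.mem_insert_self a s))
      (Finset.lcm_dvd fun i hi => hx i (Finset.mem_insert_of_mem hi))
      (hy a (Finset.mem_insert_self a s))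
      (Finset.lcm_dvd fun i hi => hy i (Finset.mem_insert_of_mem hi))

lemma vertexNum_pos {v : ℕ} {E : Finset (Sym2 (Fin v))}
    (n : {a : Sym2 (Fin v) // a ∈ E} → ℕ+) (r : Fin v) : 0 < vertexNum v E n r := by
  apply Nat.pos_of_ne_zero
  intro h0
  rw [vertexNum, Finset.lcm_eq_zero_iff] at h0
  obtain ⟨a, -, ha⟩ := h0
  exact (n a).ne_zero (by simpa using ha)

lemma vertexNum_mul {v : ℕ} {E : Finset (Sym2 (Fin v))} {m₁ m₂ : ℕ}
    (h : Nat.Coprime m₁ m₂) (hm₁ : m₁ ≠ 0) (hm₂ : m₂ ≠ 0)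
    (n₁ n₂ : {a : Sym2 (Fin v) // a ∈ E} → ℕ+)
    (h₁ : ∀ a, (n₁ a : ℕ) ∣ m₁) (h₂ : ∀ a, (n₂ a : ℕ) ∣ m₂) (r : Fin v) :
    vertexNum v E (fun a => n₁ a * n₂ a) r = vertexNum v E n₁ r * vertexNum v E n₂ r := by
  unfold vertexNum
  rw [← finset_lcm_split h hm₁ hm₂ _ (fun a => (n₁ a : ℕ)) (fun a => (n₂ a : ℕ))
    (fun i _ => h₁ i) (fun i _ => h₂ i)]
  exact Finset.lcm_congr rfl fun a _ => by push_cast; ring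

lemma nval_dvd_prod {v : ℕ} {E : Finset (Sym2 (Fin v))}
    (n : {a : Sym2 (Fin v) // a ∈ E} → ℕ+) (a : {a : Sym2 (Fin v) // a ∈ E}) :
    (n a : ℕ) ∣ ∏ r, vertexNum v E n r := by
  set r := a.1.out.1 with hr
  have hra : r ∈ a.1 := Sym2.out_fst_mem a.1
  have h1 : (n a : ℕ) ∣ vertexNum v E n r := by
    apply Finset.dvd_lcm
    exact Finset.mem_filter.mpr ⟨Finset.mem_attach _ _, hra⟩
  exact h1.trans (Finset.dvd_prod_of_mem _ (Finset.mem_univ r))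

lemma gfG_zero (v : ℕ) (E : Finset (Sym2 (Fin v))) (f : ℕ → ℂ) : gfG v E f 0 = 0 := by
  unfold gfG
  have : ∀ n : {a : Sym2 (Fin v) // a ∈ E} → ℕ+,
      (if ∏ r, vertexNum v E n r = 0 then ∏ a, f (n a : ℕ) else 0) = 0 := by
    intro n
    exact if_neg (Finset.prod_pos fun r _ => vertexNum_pos n r).ne'
  rw [finsum_congr this, finsum_zero]

/-- If `f : ℕ → ℂ` is multiplicative, then `g_{f,G}` is multiplicative. -/
theorem stmt1 (v : ℕ) (E : Finset (Sym2 (Fin v))) (hE : ∀ a ∈ E, ¬ a.IsDiag)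
    (f : ℕ → ℂ) (hf : ∀ m₁ m₂ : ℕ, Nat.Coprime m₁ m₂ → f (m₁ * m₂) = f m₁ * f m₂) :
    ∀ m₁ m₂ : ℕ, Nat.Coprime m₁ m₂ →
      gfG v E f (m₁ * m₂) = gfG v E f m₁ * gfG v E f m₂ := by
  intro m₁ m₂ h
  rcases eq_or_ne m₁ 0 with rfl | hm₁
  · have hm2 : m₂ = 1 := Nat.coprime_zero_left m₂ |>.mp h
    subst hm2
    simp [gfG_zero]
  rcases eq_or_ne m₂ 0 with rfl | hm₂
  · have hm1 : m₁ = 1 := Nat.coprime_zero_right m₁ |>.mp h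
    subst hm1
    simp [gfG_zero]
  -- notation
  set T := {a : Sym2 (Fin v) // a ∈ E}
  set F : ℕ → (T → ℕ+) → ℂ := fun m n =>
    if ∏ r, vertexNum v E n r = m then ∏ a, f (n a : ℕ) else 0 with hF
  -- finsets of candidate numberings
  set D : ℕ → Finset (T → ℕ+) := fun m =>
    Fintype.piFinset fun _ : T =>
      (Nat.divisors m).preimage (fun x : ℕ+ => (x : ℕ)) PNat.coe_injective.injOn with hD
  have hDmem : ∀ (m : ℕ) (n : T → ℕ+), n ∈ D m ↔ ∀ a : T, (n a : ℕ) ∈ Nat.divisors m := by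
    intro m n
    simp [hD, Fintype.mem_piFinset, Finset.mem_preimage]
  have hsupp : ∀ m : ℕ, m ≠ 0 → gfG v E f m = ∑ n ∈ D m, F m n := by
    intro m hm
    apply finsum_eq_sum_of_support_subset
    intro n hn
    have hcond : ∏ r, vertexNum v E n r = m := by
      by_contra hc
      exact hn (if_neg hc)
    simp only [Finset.coe_sort_coe, Finset.mem_coe]
    rw [hDmem]
    intro a
    exact Nat.mem_divisors.mpr ⟨hcond ▸ nval_dvd_prod n a, hm⟩
  rw [hsupp m₁ hm₁, hsupp m₂ hm₂, hsupp (m₁ * m₂) (mul_ne_zero hm₁ hm₂),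
    Finset.sum_mul_sum, ← Finset.sum_product']
  symm
  apply Finset.sum_bij'
    (i := fun (p : (T → ℕ+) × (T → ℕ+)) _ => fun a => p.1 a * p.2 a)
    (j := fun (n : T → ℕ+) _ =>
      (fun a => (⟨Nat.gcd (n a : ℕ) m₁, Nat.gcd_pos_of_pos_left m₁ (n a).pos⟩ : ℕ+),
       fun a => (⟨Nat.gcd (n a : ℕ) m₂, Nat.gcd_pos_of_pos_left m₂ (n a).pos⟩ : ℕ+)))
  -- hi : image is in D (m₁ * m₂)
  · intro p hp
    rw [Finset.mem_product] at hp
    rw [hDmem]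
    intro a
    have h1 := Nat.mem_divisors.mp ((hDmem m₁ p.1).mp hp.1 a)
    have h2 := Nat.mem_divisors.mp ((hDmem m₂ p.2).mp hp.2 a)
    exact Nat.mem_divisors.mpr ⟨by push_cast; exact mul_dvd_mul h1.1 h2.1,
      mul_ne_zero hm₁ hm₂⟩
  -- hj : preimage is in product
  · intro n hn
    rw [Finset.mem_product]
    constructor <;> rw [hDmem] <;> intro a
    · exact Nat.mem_divisors.mpr ⟨Nat.gcd_dvd_right _ _, hm₁⟩
    · exact Nat.mem_divisors.mpr ⟨Nat.gcd_dvd_right _ _, hm₂⟩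
  -- left inverse
  · intro p hp
    rw [Finset.mem_product] at hp
    have h1 : ∀ a, (p.1 a : ℕ) ∣ m₁ := fun a =>
      (Nat.mem_divisors.mp ((hDmem m₁ p.1).mp hp.1 a)).1
    have h2 : ∀ a, (p.2 a : ℕ) ∣ m₂ := fun a =>
      (Nat.mem_divisors.mp ((hDmem m₂ p.2).mp hp.2 a)).1
    have e1 : ∀ a : T, Nat.gcd ((p.1 a : ℕ) * (p.2 a : ℕ)) m₁ = (p.1 a : ℕ) := by
      intro a
      have hc : Nat.Coprime ((p.2 a : ℕ)) m₁ := h.symm.coprime_dvd_left (h2 a)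
      rw [mul_comm, hc.gcd_mul_left_cancel (p.1 a : ℕ)]
      exact Nat.gcd_eq_left (h1 a)
    have e2 : ∀ a : T, Nat.gcd ((p.1 a : ℕ) * (p.2 a : ℕ)) m₂ = (p.2 a : ℕ) := by
      intro a
      have hc : Nat.Coprime ((p.1 a : ℕ)) m₂ := h.coprime_dvd_left (h1 a)
      rw [hc.gcd_mul_left_cancel (p.2 a : ℕ)]
      exact Nat.gcd_eq_left (h2 a)
    ext a
    · apply PNat.coe_injective
      show Nat.gcd ((p.1 a : ℕ) * (p.2 a : ℕ)) m₁ = (p.1 a : ℕ)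
      exact e1 a
    · apply PNat.coe_injective
      show Nat.gcd ((p.1 a : ℕ) * (p.2 a : ℕ)) m₂ = (p.2 a : ℕ)
      exact e2 a
  -- right inverse
  · intro n hn
    have hdvd : ∀ a : T, (n a : ℕ) ∣ m₁ * m₂ := fun a =>
      (Nat.mem_divisors.mp ((hDmem (m₁ * m₂) n).mp hn a)).1
    funext a
    exact PNat.coe_injective (gcd_split h (hdvd a))
  -- terms agree
  · intro p hp
    rw [Finset.mem_product] at hp
    have h1 : ∀ a, (p.1 a : ℕ) ∣ m₁ := fun a =>
      (Nat.mem_divisors.mp ((hDmem m₁ p.1).mp hp.1 a)).1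
    have h2 : ∀ a, (p.2 a : ℕ) ∣ m₂ := fun a =>
      (Nat.mem_divisors.mp ((hDmem m₂ p.2).mp hp.2 a)).1
    simp only [hF]
    have hprod : ∏ r, vertexNum v E (fun a => p.1 a * p.2 a) r
        = (∏ r, vertexNum v E p.1 r) * ∏ r, vertexNum v E p.2 r := by
      rw [← Finset.prod_mul_distrib]
      exact Finset.prod_congr rfl fun r _ => vertexNum_mul h hm₁ hm₂ p.1 p.2 h1 h2 r
    have hA : (∏ r, vertexNum v E p.1 r).Coprime m₂ :=
      Nat.Coprime.prod_left fun r _ =>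
        h.coprime_dvd_left (Finset.lcm_dvd fun a _ => h1 a)
    have hB : (∏ r, vertexNum v E p.2 r).Coprime m₁ :=
      Nat.Coprime.prod_left fun r _ =>
        h.symm.coprime_dvd_left (Finset.lcm_dvd fun a _ => h2 a)
    have hiff : (∏ r, vertexNum v E p.1 r) * (∏ r, vertexNum v E p.2 r) = m₁ * m₂ ↔
        (∏ r, vertexNum v E p.1 r = m₁ ∧ ∏ r, vertexNum v E p.2 r = m₂) := by
      constructor
      · intro heq
        set A := ∏ r, vertexNum v E p.1 r
        set B := ∏ r, vertexNum v E p.2 r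
        have hAd : A ∣ m₁ := hA.dvd_of_dvd_mul_right (heq ▸ Dvd.intro B rfl)
        have hBd : B ∣ m₂ := hB.dvd_of_dvd_mul_left (heq ▸ Dvd.intro_left A rfl)
        obtain ⟨u, hu⟩ := hAd
        obtain ⟨w, hw⟩ := hBd
        have hABpos : 0 < A * B := by
          rw [heq]; exact Nat.pos_of_ne_zero (mul_ne_zero hm₁ hm₂)
        have huw : (A * B) * 1 = (A * B) * (u * w) := by
          calc (A * B) * 1 = m₁ * m₂ := by rw [mul_one, heq]
            _ = (A * u) * (B * w) := by rw [hu, hw]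
            _ = (A * B) * (u * w) := by ring
        have h1' : u * w = 1 := (Nat.eq_of_mul_eq_mul_left hABpos huw).symm
        have hu1 : u = 1 := Nat.eq_one_of_mul_eq_one_right h1'
        have hw1 : w = 1 := Nat.eq_one_of_mul_eq_one_left h1'
        constructor
        · rw [hu, hu1, mul_one]
        · rw [hw, hw1, mul_one]
      · rintro ⟨hA1, hB1⟩
        rw [hA1, hB1]
    have hfprod : (∏ a : T, f ((p.1 a * p.2 a : ℕ+) : ℕ))
        = (∏ a : T, f (p.1 a : ℕ)) * ∏ a : T, f (p.2 a : ℕ) := by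
      rw [← Finset.prod_mul_distrib]
      apply Finset.prod_congr rfl
      intro a _
      push_cast
      exact hf _ _ ((h.coprime_dvd_left (h1 a)).coprime_dvd_right (h2 a))
    rw [hprod, hfprod, if_congr hiff rfl rfl]
    by_cases c1 : ∏ r, vertexNum v E p.1 r = m₁ <;>
      by_cases c2 : ∏ r, vertexNum v E p.2 r = m₂ <;>
      simp [c1, c2]
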